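/- For an NMVM random variable S = μ + Θγ + √Θ σ Z, the conditional tail expectation at level α is CTE_α(S) = μ + c* (1−α*)/(1−α) · (γ + σ² h_{S*}(s_α)), where c* = E[Θ], S* is the size-biased mixture version of S, α* = 1 − F̄_{S*}(s_α), and h_{S*} is the hazard function of S*. -/

import Mathlib

open MeasureTheory Set
open Filter Real Topology

/-- Density of the normal distribution with mean `m` and variance `v`. -/
noncomputable def ndens (m v x : ℝ) : ℝ :=
  (Real.sqrt (2 * Real.pi * v))⁻¹ * Real.exp (-(x - m) ^ 2 / (2 * v))

/-- Density of the univariate NMVM distribution with parameters `μ, γ, σ` and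
mixing density `q` on `(0, ∞)`. -/
noncomputable def mixdens (μ γ σ : ℝ) (q : ℝ → ℝ) (s : ℝ) : ℝ :=
  ∫ θ in Set.Ioi (0:ℝ), ndens (μ + θ * γ) (θ * σ ^ 2) s * q θ

/-- Survival function of the univariate NMVM distribution. -/
noncomputable def surv (μ γ σ : ℝ) (q : ℝ → ℝ) (c : ℝ) : ℝ :=
  ∫ s in Set.Ioi c, mixdens μ γ σ q s

/-- `k`-th tail moment `E[S^k | S > c]` of the univariate NMVM distribution. -/
noncomputable def tailmom (μ γ σ : ℝ) (q : ℝ → ℝ) (k : ℕ) (c : ℝ) : ℝ :=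
  (surv μ γ σ q c)⁻¹ * ∫ s in Set.Ioi c, s ^ k * mixdens μ γ σ q s

lemma ndens_nonneg (m v x : ℝ) : 0 ≤ ndens m v x :=
  mul_nonneg (inv_nonneg.2 (Real.sqrt_nonneg _)) (Real.exp_pos _).le

lemma ndens_eq_gauss (m : ℝ) {v : ℝ} (hv : 0 < v) :
    ndens m v = ProbabilityTheory.gaussianPDFReal m v.toNNReal := by
  funext x
  simp [ndens, ProbabilityTheory.gaussianPDFReal, Real.coe_toNNReal v hv.le]

lemma ndens_integrable (m : ℝ) {v : ℝ} (hv : 0 < v) : Integrable (ndens m v) := by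
  rw [ndens_eq_gauss m hv]
  exact ProbabilityTheory.integrable_gaussianPDFReal m v.toNNReal

lemma ndens_integral (m : ℝ) {v : ℝ} (hv : 0 < v) : ∫ x, ndens m v x = 1 := by
  rw [ndens_eq_gauss m hv]
  exact ProbabilityTheory.integral_gaussianPDFReal_eq_one m (ne_of_gt (Real.toNNReal_pos.2 hv))

lemma exp_form (m : ℝ) {v : ℝ} (hv : 0 < v) (x : ℝ) :
    -(x - m) ^ 2 / (2 * v) = -((2*v)⁻¹ * (x - m) ^ 2) := by
  field_simp

lemma ndens_mul_integrable (m : ℝ) {v : ℝ} (hv : 0 < v) :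
    Integrable (fun x => (x - m) * ndens m v x) := by
  have hb : (0:ℝ) < (2*v)⁻¹ := by positivity
  have h1 : Integrable (fun x => x * Real.exp (-((2*v)⁻¹ * x ^ 2))) := by
    simpa [neg_mul] using integrable_mul_exp_neg_mul_sq hb
  have h2 := (h1.comp_sub_right m).const_mul (Real.sqrt (2 * Real.pi * v))⁻¹
  refine h2.congr (Eventually.of_forall fun x => ?_)
  simp only [ndens, exp_form m hv]
  ring

lemma ndens_hasDeriv (m : ℝ) {v : ℝ} (hv : 0 < v) (x : ℝ) :
    HasDerivAt (fun y => -v * ndens m v y) ((x - m) * ndens m v x) x := by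
  have h1 : HasDerivAt (fun y : ℝ => -(y - m) ^ 2 / (2 * v)) (-(x - m) / v) x := by
    have : HasDerivAt (fun y : ℝ => (y - m) ^ 2) (2 * (x - m)) x := by
      simpa using ((hasDerivAt_id x).sub_const m).fun_pow 2
    have h2 := (this.neg).div_const (2 * v)
    refine h2.congr_deriv ?_
    field_simp
  have h3 := h1.exp
  have h4 := h3.const_mul (-v * (Real.sqrt (2 * Real.pi * v))⁻¹)
  convert h4 using 1
  · rfl
  · rfl
  · funext y; simp only [ndens]; ring
  · simp only [ndens]; field_simp

lemma ndens_tendsto (m : ℝ) {v : ℝ} (hv : 0 < v) :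
    Tendsto (fun x => -v * ndens m v x) atTop (𝓝 0) := by
  have h1 : Tendsto (fun x : ℝ => -(x - m) ^ 2 / (2 * v)) atTop atBot := by
    apply Tendsto.atBot_div_const (by positivity)
    apply tendsto_neg_atBot_iff.2
    have : Tendsto (fun x : ℝ => x - m) atTop atTop := tendsto_atTop_add_const_right _ (-m) tendsto_id
    exact (tendsto_pow_atTop (two_ne_zero)).comp this
  have h2 : Tendsto (fun x => ndens m v x) atTop (𝓝 0) := by
    have := (Real.tendsto_exp_atBot.comp h1).const_mul (Real.sqrt (2 * Real.pi * v))⁻¹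
    simpa [ndens, Function.comp] using this
  simpa using h2.const_mul (-v)

lemma ndens_tail_sub (m : ℝ) {v : ℝ} (hv : 0 < v) (c : ℝ) :
    ∫ x in Ioi c, (x - m) * ndens m v x = v * ndens m v c := by
  have h := integral_Ioi_of_hasDerivAt_of_tendsto
    (f := fun y => -v * ndens m v y) (f' := fun x => (x - m) * ndens m v x) (a := c) (m := 0)
    ((ndens_hasDeriv m hv c).continuousAt.continuousWithinAt)
    (fun x _ => ndens_hasDeriv m hv x)
    ((ndens_mul_integrable m hv).integrableOn)
    (ndens_tendsto m hv)
  rw [h]; ring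

lemma ndens_tail_first (m : ℝ) {v : ℝ} (hv : 0 < v) (c : ℝ) :
    ∫ x in Ioi c, x * ndens m v x
      = m * (∫ x in Ioi c, ndens m v x) + v * ndens m v c := by
  have h1 : ∀ x : ℝ, x * ndens m v x = (x - m) * ndens m v x + m * ndens m v x := by
    intro x; ring
  rw [MeasureTheory.integral_congr_ae (Eventually.of_forall h1),
    MeasureTheory.integral_add ((ndens_mul_integrable m hv).integrableOn)
      (((ndens_integrable m hv).const_mul m).integrableOn),
    ndens_tail_sub m hv c, MeasureTheory.integral_const_mul]
  ring

lemma sqrt_inv_exp_bound {a θ : ℝ} (ha : 0 < a) (hθ : 0 < θ) :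
    (Real.sqrt θ)⁻¹ * Real.exp (-(a / θ)) ≤ (Real.sqrt (2 * a))⁻¹ := by
  have h1 : Real.sqrt (2 * a / θ) ≤ Real.exp (a / θ) := by
    have h2 : 2 * a / θ ≤ Real.exp (2 * a / θ) := by
      have := Real.add_one_le_exp (2 * a / θ); linarith
    calc Real.sqrt (2 * a / θ) ≤ Real.sqrt (Real.exp (2 * a / θ)) := Real.sqrt_le_sqrt h2
      _ = Real.exp (a / θ) := by
          rw [show 2 * a / θ = a / θ + a / θ by ring, Real.exp_add,
            Real.sqrt_mul_self (Real.exp_pos _).le]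
  have h3 : Real.exp (-(a / θ)) ≤ (Real.sqrt (2 * a / θ))⁻¹ := by
    rw [Real.exp_neg]
    exact inv_anti₀ (Real.sqrt_pos.2 (by positivity)) h1
  have h4 : (Real.sqrt θ)⁻¹ * (Real.sqrt (2 * a / θ))⁻¹ = (Real.sqrt (2 * a))⁻¹ := by
    rw [← mul_inv, ← Real.sqrt_mul hθ.le, mul_div_cancel₀ _ (ne_of_gt hθ)]
  calc (Real.sqrt θ)⁻¹ * Real.exp (-(a / θ))
      ≤ (Real.sqrt θ)⁻¹ * (Real.sqrt (2 * a / θ))⁻¹ := by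
        apply mul_le_mul_of_nonneg_left h3 (by positivity)
    _ = (Real.sqrt (2 * a))⁻¹ := h4

lemma ndens_bound (μ γ : ℝ) {σ θ s : ℝ} (hσ : 0 < σ) (hθ : 0 < θ) (hs : s ≠ μ) :
    ndens (μ + θ * γ) (θ * σ ^ 2) s ≤
      Real.exp ((s - μ) * γ / σ ^ 2) * (Real.sqrt (2 * Real.pi * σ ^ 2))⁻¹ * (σ / |s - μ|) := by
  set d := s - μ with hdd
  have hd0 : d ≠ 0 := sub_ne_zero.2 hs
  have ha : (0:ℝ) < d ^ 2 / (2 * σ ^ 2) := by positivity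
  set a := d ^ 2 / (2 * σ ^ 2) with haa
  have hexp : -(s - (μ + θ * γ)) ^ 2 / (2 * (θ * σ ^ 2)) ≤ d * γ / σ ^ 2 + -(a / θ) := by
    have key : d * γ / σ ^ 2 + -(a / θ) - (-(s - (μ + θ * γ)) ^ 2 / (2 * (θ * σ ^ 2)))
        = θ * γ ^ 2 / (2 * σ ^ 2) := by
      rw [haa, hdd]; field_simp; ring
    have h2 : (0:ℝ) ≤ θ * γ ^ 2 / (2 * σ ^ 2) := by positivity
    linarith
  have hsq : Real.sqrt (2 * Real.pi * (θ * σ ^ 2))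
      = Real.sqrt (2 * Real.pi * σ ^ 2) * Real.sqrt θ := by
    rw [← Real.sqrt_mul (by positivity)]
    ring_nf
  have h2a : Real.sqrt (2 * a) = |d| / σ := by
    rw [show 2 * a = (|d| / σ) ^ 2 by rw [haa]; rw [div_pow, sq_abs]; field_simp,
      Real.sqrt_sq (by positivity)]
  have hnd : ndens (μ + θ * γ) (θ * σ ^ 2) s
      ≤ (Real.sqrt (2 * Real.pi * σ ^ 2))⁻¹ * ((Real.sqrt θ)⁻¹
          * (Real.exp (d * γ / σ ^ 2) * Real.exp (-(a / θ)))) := by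
    rw [ndens, hsq, mul_inv, ← Real.exp_add, mul_assoc]
    exact mul_le_mul_of_nonneg_left
      (mul_le_mul_of_nonneg_left (Real.exp_le_exp.2 hexp) (by positivity)) (by positivity)
  refine hnd.trans ?_
  have hb := sqrt_inv_exp_bound ha hθ
  rw [h2a, inv_div] at hb
  calc (Real.sqrt (2 * Real.pi * σ ^ 2))⁻¹ * ((Real.sqrt θ)⁻¹
          * (Real.exp (d * γ / σ ^ 2) * Real.exp (-(a / θ))))
      = (Real.sqrt (2 * Real.pi * σ ^ 2))⁻¹ * Real.exp (d * γ / σ ^ 2)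
          * ((Real.sqrt θ)⁻¹ * Real.exp (-(a / θ))) := by ring
    _ ≤ (Real.sqrt (2 * Real.pi * σ ^ 2))⁻¹ * Real.exp (d * γ / σ ^ 2) * (σ / |d|) := by
        apply mul_le_mul_of_nonneg_left hb (by positivity)
    _ = Real.exp (d * γ / σ ^ 2) * (Real.sqrt (2 * Real.pi * σ ^ 2))⁻¹ * (σ / |d|) := by ring

/-- CTE of a univariate NMVM random variable. -/
theorem nmvm_cte
    (μ γ σ α sα : ℝ) (hσ : 0 < σ) (p : ℝ → ℝ)
    (hp0 : ∀ θ, 0 ≤ p θ) (hp1 : ∫ θ in Set.Ioi (0:ℝ), p θ = 1)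
    (cstar : ℝ) (hcstar : cstar = ∫ θ in Set.Ioi (0:ℝ), θ * p θ) (hcpos : 0 < cstar)
    (pstar : ℝ → ℝ) (hpstar : pstar = fun θ => θ * p θ / cstar)
    (hα01 : α ∈ Set.Ioo (0:ℝ) 1)
    (hquant : surv μ γ σ p sα = 1 - α)
    (αstar : ℝ) (hαstar : αstar = 1 - surv μ γ σ pstar sα)
    (hspos : 0 < surv μ γ σ pstar sα)
    (hintp : IntegrableOn (fun s => s * mixdens μ γ σ p s) (Set.Ioi sα)) :
    tailmom μ γ σ p 1 sα
      = μ + cstar * (1 - αstar) / (1 - α) *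
          (γ + σ ^ 2 * (mixdens μ γ σ pstar sα / surv μ γ σ pstar sα)) := by
  obtain ⟨hα0, hα1⟩ := hα01
  have h1α : (0:ℝ) < 1 - α := by linarith
  -- basic integrabilities
  have hpint : IntegrableOn p (Set.Ioi (0:ℝ)) := by
    by_contra h; rw [MeasureTheory.integral_undef h] at hp1; norm_num at hp1
  have htpint : IntegrableOn (fun θ => θ * p θ) (Set.Ioi (0:ℝ)) := by
    by_contra h; rw [MeasureTheory.integral_undef h] at hcstar
    rw [hcstar] at hcpos; norm_num at hcpos
  have hmixp_int : IntegrableOn (mixdens μ γ σ p) (Set.Ioi sα) := by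
    by_contra h; rw [surv, MeasureTheory.integral_undef h] at hquant; linarith
  have hmixps_int : IntegrableOn (mixdens μ γ σ pstar) (Set.Ioi sα) := by
    by_contra h; rw [surv, MeasureTheory.integral_undef h] at hspos; linarith
  -- the product functions
  set Fp : ℝ × ℝ → ℝ := fun z => ndens (μ + z.2 * γ) (z.2 * σ ^ 2) z.1 * p z.2 with hFp
  set Gp : ℝ × ℝ → ℝ := fun z => z.2 * Fp z with hGp
  set Hp : ℝ × ℝ → ℝ := fun z => z.1 * Fp z with hHp
  set Kp : ℝ × ℝ → ℝ := fun z => (z.1 - (μ + z.2 * γ)) * Fp z with hKp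
  have hFnn : ∀ z, 0 ≤ Fp z := fun z => mul_nonneg (ndens_nonneg _ _ _) (hp0 _)
  -- mixdens pstar expression
  have hGmix : ∀ s, mixdens μ γ σ pstar s
      = cstar⁻¹ * ∫ θ in Set.Ioi (0:ℝ), Gp (s, θ) := by
    intro s
    have h1 : (fun θ => ndens (μ + θ * γ) (θ * σ ^ 2) s * pstar θ)
        = fun θ => cstar⁻¹ * Gp (s, θ) := by
      funext θ; rw [hpstar]; simp only [hGp, hFp]; ring
    rw [mixdens, h1, MeasureTheory.integral_const_mul]
  -- measurability
  have hker : Measurable (fun z : ℝ × ℝ => ndens (μ + z.2 * γ) (z.2 * σ ^ 2) z.1) := by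
    unfold ndens
    apply Measurable.mul
    · exact (Real.continuous_sqrt.measurable.comp
        ((measurable_const.mul (measurable_snd.mul measurable_const)))).inv
    · exact (Real.measurable_exp.comp
        (((((measurable_fst.sub (measurable_const.add
          (measurable_snd.mul measurable_const))).pow_const 2).neg)).div
          (measurable_const.mul (measurable_snd.mul measurable_const))))
  have hpm : AEStronglyMeasurable (fun z : ℝ × ℝ => p z.2)
      ((volume.restrict (Set.Ioi sα)).prod (volume.restrict (Set.Ioi (0:ℝ)))) :=
    hpint.aestronglyMeasurable.comp_snd
  have hFm : AEStronglyMeasurable Fp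
      ((volume.restrict (Set.Ioi sα)).prod (volume.restrict (Set.Ioi (0:ℝ)))) :=
    hker.aestronglyMeasurable.mul hpm
  have hGm : AEStronglyMeasurable Gp
      ((volume.restrict (Set.Ioi sα)).prod (volume.restrict (Set.Ioi (0:ℝ)))) :=
    measurable_snd.aestronglyMeasurable.mul hFm
  have hHm : AEStronglyMeasurable Hp
      ((volume.restrict (Set.Ioi sα)).prod (volume.restrict (Set.Ioi (0:ℝ)))) :=
    measurable_fst.aestronglyMeasurable.mul hFm
  -- sections
  have hsecF : ∀ s : ℝ, s ≠ μ → Integrable (fun θ => Fp (s, θ))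
      (volume.restrict (Set.Ioi (0:ℝ))) := by
    intro s hs
    set C := Real.exp ((s - μ) * γ / σ ^ 2) * (Real.sqrt (2 * Real.pi * σ ^ 2))⁻¹
      * (σ / |s - μ|) with hC
    apply Integrable.mono' (hpint.const_mul C)
    · exact ((hker.comp (measurable_const.prodMk measurable_id)).aestronglyMeasurable).mul
        hpint.aestronglyMeasurable
    · filter_upwards [ae_restrict_mem measurableSet_Ioi] with θ hθ
      rw [Real.norm_eq_abs, abs_of_nonneg (hFnn (s, θ))]
      exact mul_le_mul_of_nonneg_right (ndens_bound μ γ hσ hθ hs) (hp0 θ)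
  have hsecG : ∀ s : ℝ, s ≠ μ → Integrable (fun θ => Gp (s, θ))
      (volume.restrict (Set.Ioi (0:ℝ))) := by
    intro s hs
    set C := Real.exp ((s - μ) * γ / σ ^ 2) * (Real.sqrt (2 * Real.pi * σ ^ 2))⁻¹
      * (σ / |s - μ|) with hC
    apply Integrable.mono' (htpint.const_mul C)
    · exact measurable_id.aestronglyMeasurable.mul
        (((hker.comp (measurable_const.prodMk measurable_id)).aestronglyMeasurable).mul
          hpint.aestronglyMeasurable)
    · filter_upwards [ae_restrict_mem measurableSet_Ioi] with θ hθ
      have hθ0 : (0:ℝ) < θ := hθ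
      rw [Real.norm_eq_abs, abs_of_nonneg (mul_nonneg hθ0.le (hFnn (s, θ)))]
      have h1 : θ * Fp (s, θ) = ndens (μ + θ * γ) (θ * σ ^ 2) s * (θ * p θ) := by
        simp only [hFp]; ring
      have h2 : C * (θ * p θ) = C * (θ * p θ) := rfl
      rw [h1]
      exact mul_le_mul_of_nonneg_right (ndens_bound μ γ hσ hθ0 hs)
        (mul_nonneg hθ0.le (hp0 θ))
  have haes : ∀ᵐ s ∂(volume.restrict (Set.Ioi sα)), s ≠ μ := by
    apply ae_restrict_of_ae
    have h0 : volume ({μ} : Set ℝ) = 0 := measure_singleton μ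
    filter_upwards [measure_eq_zero_iff_ae_notMem.1 h0] with s hs
    simpa using hs
  -- product integrability
  have hFprod : Integrable Fp
      ((volume.restrict (Set.Ioi sα)).prod (volume.restrict (Set.Ioi (0:ℝ)))) := by
    refine (MeasureTheory.integrable_prod_iff hFm).2 ⟨?_, ?_⟩
    · filter_upwards [haes] with s hs using hsecF s hs
    · have h1 : (fun s => ∫ θ in Set.Ioi (0:ℝ), ‖Fp (s, θ)‖)
          = fun s => mixdens μ γ σ p s := by
        funext s
        rw [mixdens]
        refine MeasureTheory.integral_congr_ae (Eventually.of_forall fun θ => ?_)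
        show ‖Fp (s, θ)‖ = ndens (μ + θ * γ) (θ * σ ^ 2) s * p θ
        rw [Real.norm_eq_abs, abs_of_nonneg (hFnn (s, θ))]
      rw [h1]; exact hmixp_int
  have hGprod : Integrable Gp
      ((volume.restrict (Set.Ioi sα)).prod (volume.restrict (Set.Ioi (0:ℝ)))) := by
    refine (MeasureTheory.integrable_prod_iff hGm).2 ⟨?_, ?_⟩
    · filter_upwards [haes] with s hs using hsecG s hs
    · have h1 : (fun s => ∫ θ in Set.Ioi (0:ℝ), ‖Gp (s, θ)‖)
          = fun s => cstar * mixdens μ γ σ pstar s := by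
        funext s
        rw [hGmix s, ← mul_assoc, mul_inv_cancel₀ (ne_of_gt hcpos), one_mul]
        refine MeasureTheory.integral_congr_ae ?_
        filter_upwards [ae_restrict_mem measurableSet_Ioi] with θ hθ
        have hθ0 : (0:ℝ) < θ := hθ
        rw [Real.norm_eq_abs, abs_of_nonneg (mul_nonneg hθ0.le (hFnn (s, θ)))]
      rw [h1]
      exact hmixps_int.const_mul cstar
  have hHprod : Integrable Hp
      ((volume.restrict (Set.Ioi sα)).prod (volume.restrict (Set.Ioi (0:ℝ)))) := by
    refine (MeasureTheory.integrable_prod_iff hHm).2 ⟨?_, ?_⟩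
    · filter_upwards [haes] with s hs using (hsecF s hs).const_mul s
    · have h1 : (fun s => ∫ θ in Set.Ioi (0:ℝ), ‖Hp (s, θ)‖)
          = fun s => |s| * mixdens μ γ σ p s := by
        funext s
        rw [mixdens, ← MeasureTheory.integral_const_mul]
        refine MeasureTheory.integral_congr_ae (Eventually.of_forall fun θ => ?_)
        show ‖Hp (s, θ)‖ = |s| * (ndens (μ + θ * γ) (θ * σ ^ 2) s * p θ)
        rw [Real.norm_eq_abs, hHp]
        show |s * Fp (s, θ)| = |s| * (ndens (μ + θ * γ) (θ * σ ^ 2) s * p θ)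
        rw [abs_mul, abs_of_nonneg (hFnn (s, θ))]
      rw [h1]
      refine hintp.abs.congr (Eventually.of_forall fun s => ?_)
      have hmn : (0:ℝ) ≤ mixdens μ γ σ p s :=
        MeasureTheory.integral_nonneg fun θ => mul_nonneg (ndens_nonneg _ _ _) (hp0 θ)
      show |s * mixdens μ γ σ p s| = |s| * mixdens μ γ σ p s
      rw [abs_mul, abs_of_nonneg hmn]
  have hKprod : Integrable Kp
      ((volume.restrict (Set.Ioi sα)).prod (volume.restrict (Set.Ioi (0:ℝ)))) := by
    refine ((hHprod.sub (hFprod.const_mul μ)).sub (hGprod.const_mul γ)).congr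
      (Eventually.of_forall fun z => ?_)
    show Hp z - μ * Fp z - γ * Gp z = Kp z
    simp only [hHp, hGp, hKp]
    ring
  -- marginals over s, as functions of θ
  have hMF : Integrable (fun θ => ∫ s in Set.Ioi sα, Fp (s, θ))
      (volume.restrict (Set.Ioi (0:ℝ))) := hFprod.integral_prod_right
  have hMG : Integrable (fun θ => ∫ s in Set.Ioi sα, Gp (s, θ))
      (volume.restrict (Set.Ioi (0:ℝ))) := hGprod.integral_prod_right
  have hMK : Integrable (fun θ => ∫ s in Set.Ioi sα, Kp (s, θ))
      (volume.restrict (Set.Ioi (0:ℝ))) := hKprod.integral_prod_right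
  -- swaps
  have hswapF : ∫ s in Set.Ioi sα, ∫ θ in Set.Ioi (0:ℝ), Fp (s, θ)
      = ∫ θ in Set.Ioi (0:ℝ), ∫ s in Set.Ioi sα, Fp (s, θ) :=
    MeasureTheory.integral_integral_swap (f := fun s θ => Fp (s, θ)) hFprod
  have hswapG : ∫ s in Set.Ioi sα, ∫ θ in Set.Ioi (0:ℝ), Gp (s, θ)
      = ∫ θ in Set.Ioi (0:ℝ), ∫ s in Set.Ioi sα, Gp (s, θ) :=
    MeasureTheory.integral_integral_swap (f := fun s θ => Gp (s, θ)) hGprod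
  have hswapH : ∫ s in Set.Ioi sα, ∫ θ in Set.Ioi (0:ℝ), Hp (s, θ)
      = ∫ θ in Set.Ioi (0:ℝ), ∫ s in Set.Ioi sα, Hp (s, θ) :=
    MeasureTheory.integral_integral_swap (f := fun s θ => Hp (s, θ)) hHprod
  -- evaluation of inner s-integrals for θ > 0
  have hNint : ∀ θ : ℝ, 0 < θ → ∀ s:ℝ, True := fun _ _ _ => trivial
  have hinner : ∀ θ ∈ Set.Ioi (0:ℝ),
      ∫ s in Set.Ioi sα, Hp (s, θ)
        = μ * (∫ s in Set.Ioi sα, Fp (s, θ)) + γ * (∫ s in Set.Ioi sα, Gp (s, θ))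
          + σ ^ 2 * (θ * p θ * ndens (μ + θ * γ) (θ * σ ^ 2) sα) := by
    intro θ hθ
    have hθ0 : (0:ℝ) < θ := hθ
    have hv : (0:ℝ) < θ * σ ^ 2 := by positivity
    have eH : (fun s => Hp (s, θ))
        = fun s => (s * ndens (μ + θ * γ) (θ * σ ^ 2) s) * p θ := by
      funext s; show s * Fp (s, θ) = _; simp only [hFp]; ring
    have eF : (fun s => Fp (s, θ))
        = fun s => ndens (μ + θ * γ) (θ * σ ^ 2) s * p θ := rfl
    have eG : (fun s => Gp (s, θ))
        = fun s => (θ * ndens (μ + θ * γ) (θ * σ ^ 2) s) * p θ := by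
      funext s; show θ * Fp (s, θ) = _; simp only [hFp]; ring
    rw [eH, eF, eG, MeasureTheory.integral_mul_const, MeasureTheory.integral_mul_const,
      MeasureTheory.integral_mul_const, ndens_tail_first _ hv sα]
    have : (fun s => θ * ndens (μ + θ * γ) (θ * σ ^ 2) s)
        = fun s => θ * ndens (μ + θ * γ) (θ * σ ^ 2) s := rfl
    rw [MeasureTheory.integral_const_mul]
    ring
  -- the key identity
  have key : (∫ s in Set.Ioi sα, s * mixdens μ γ σ p s)
      = μ * (1 - α) + γ * (cstar * surv μ γ σ pstar sα)
        + σ ^ 2 * (cstar * mixdens μ γ σ pstar sα) := by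
    have e1 : (fun s => s * mixdens μ γ σ p s)
        = fun s => ∫ θ in Set.Ioi (0:ℝ), Hp (s, θ) := by
      funext s
      rw [mixdens, ← MeasureTheory.integral_const_mul]
    rw [e1, hswapH,
      MeasureTheory.setIntegral_congr_fun measurableSet_Ioi hinner]
    have hsplit : ∫ θ in Set.Ioi (0:ℝ),
        (μ * (∫ s in Set.Ioi sα, Fp (s, θ)) + γ * (∫ s in Set.Ioi sα, Gp (s, θ))
          + σ ^ 2 * (θ * p θ * ndens (μ + θ * γ) (θ * σ ^ 2) sα))
        = μ * (∫ θ in Set.Ioi (0:ℝ), ∫ s in Set.Ioi sα, Fp (s, θ))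
          + γ * (∫ θ in Set.Ioi (0:ℝ), ∫ s in Set.Ioi sα, Gp (s, θ))
          + σ ^ 2 * (∫ θ in Set.Ioi (0:ℝ), θ * p θ * ndens (μ + θ * γ) (θ * σ ^ 2) sα) := by
      have hKeval : ∀ θ ∈ Set.Ioi (0:ℝ),
          (∫ s in Set.Ioi sα, Kp (s, θ))
            = σ ^ 2 * (θ * p θ * ndens (μ + θ * γ) (θ * σ ^ 2) sα) := by
        intro θ hθ
        have hθ0 : (0:ℝ) < θ := hθ
        have hv : (0:ℝ) < θ * σ ^ 2 := by positivity
        have eK : (fun s => Kp (s, θ))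
            = fun s => ((s - (μ + θ * γ)) * ndens (μ + θ * γ) (θ * σ ^ 2) s) * p θ := by
          funext s; show (s - (μ + θ * γ)) * Fp (s, θ) = _; simp only [hFp]; ring
        rw [eK, MeasureTheory.integral_mul_const, ndens_tail_sub _ hv sα]
        ring
      have hthird : Integrable
          (fun θ => σ ^ 2 * (θ * p θ * ndens (μ + θ * γ) (θ * σ ^ 2) sα))
          (volume.restrict (Set.Ioi (0:ℝ))) := by
        refine hMK.congr ?_
        filter_upwards [ae_restrict_mem measurableSet_Ioi] with θ hθ using hKeval θ hθ
      have hμF : Integrable (fun θ => μ * (∫ s in Set.Ioi sα, Fp (s, θ)))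
          (volume.restrict (Set.Ioi (0:ℝ))) := hMF.const_mul μ
      have hγG : Integrable (fun θ => γ * (∫ s in Set.Ioi sα, Gp (s, θ)))
          (volume.restrict (Set.Ioi (0:ℝ))) := hMG.const_mul γ
      have h12 : Integrable (fun θ => μ * (∫ s in Set.Ioi sα, Fp (s, θ))
          + γ * (∫ s in Set.Ioi sα, Gp (s, θ)))
          (volume.restrict (Set.Ioi (0:ℝ))) := hμF.add hγG
      rw [MeasureTheory.integral_add h12 hthird,
        MeasureTheory.integral_add hμF hγG,
        MeasureTheory.integral_const_mul, MeasureTheory.integral_const_mul,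
        MeasureTheory.integral_const_mul]
    rw [hsplit]
    have hF1 : (∫ θ in Set.Ioi (0:ℝ), ∫ s in Set.Ioi sα, Fp (s, θ)) = 1 - α := by
      rw [← hswapF, ← hquant, surv]
      rfl
    have hG1 : (∫ θ in Set.Ioi (0:ℝ), ∫ s in Set.Ioi sα, Gp (s, θ))
        = cstar * surv μ γ σ pstar sα := by
      rw [← hswapG]
      have e : (fun s => ∫ θ in Set.Ioi (0:ℝ), Gp (s, θ))
          = fun s => cstar * mixdens μ γ σ pstar s := by
        funext s
        rw [hGmix s, ← mul_assoc, mul_inv_cancel₀ (ne_of_gt hcpos), one_mul]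
      rw [e, MeasureTheory.integral_const_mul, surv]
    have h3 : (∫ θ in Set.Ioi (0:ℝ), θ * p θ * ndens (μ + θ * γ) (θ * σ ^ 2) sα)
        = cstar * mixdens μ γ σ pstar sα := by
      have e : (fun θ => θ * p θ * ndens (μ + θ * γ) (θ * σ ^ 2) sα)
          = fun θ => Gp (sα, θ) := by
        funext θ; show _ = θ * Fp (sα, θ); simp only [hFp]; ring
      rw [e, hGmix sα, ← mul_assoc, mul_inv_cancel₀ (ne_of_gt hcpos), one_mul]
    rw [hF1, hG1, h3]
  -- final assembly
  have hpow : (fun s => s ^ 1 * mixdens μ γ σ p s) = fun s => s * mixdens μ γ σ p s := by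
    funext s; rw [pow_one]
  rw [tailmom, hpow, hquant, key, show (1 - αstar) = surv μ γ σ pstar sα by
    rw [hαstar]; ring]
  have hS0 : surv μ γ σ pstar sα ≠ 0 := ne_of_gt hspos
  field_simp
  ring
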